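/- Let x_1,…,x_m ∈ ℝ^d satisfy max_i ‖x_i‖ ≤ 1 and be separable with margin γ ∈ (0,1], let ℓ be the logistic loss, and consider stochastic gradient descent with step size 1: i_1, i_2, … i.i.d. uniform on {1,…,m}, w_1 = 0, w_{t+1} = w_t − ℓ'(x_{i_t}ᵀw_t)·x_{i_t}, and averaged iterate v_T = (1/T)Σ_{t=1}^T w_t. Then for any T > 1/γ² and any α ∈ [0,1], letting δ denote the (random) fraction of indices i ∈ {1,…,m} for which x_iᵀ(v_T/‖v_T‖) ≤ (1−α)γ/5, the expectation of δ over the randomness of SGD is at most (8 + 4log²(γ²T))/(3γ²T^α). Equivalently, with δ of this expectation, at least (1−δ)·m of the indices satisfy x_iᵀ(v_T/‖v_T‖) > (1−α)γ/5. -/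

import Mathlib

open scoped RealInnerProductSpace
open Classical



section Aux

lemma llog_nonneg (z : ℝ) : 0 ≤ Real.log (1 + Real.exp (-z)) :=
  Real.log_nonneg (by nlinarith [Real.exp_pos (-z)])

lemma llog_le_exp (z : ℝ) : Real.log (1 + Real.exp (-z)) ≤ Real.exp (-z) := by
  have := Real.log_le_sub_one_of_pos (x := 1 + Real.exp (-z)) (by positivity)
  linarith

lemma llog_anti {z w : ℝ} (h : z ≤ w) :
    Real.log (1 + Real.exp (-w)) ≤ Real.log (1 + Real.exp (-z)) := by
  apply Real.log_le_log (by positivity)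
  have := Real.exp_le_exp.2 (neg_le_neg h)
  linarith

lemma llog_lb (z : ℝ) : (1 + Real.exp z)⁻¹ ≤ Real.log (1 + Real.exp (-z)) := by
  have h := Real.one_sub_inv_le_log_of_pos (x := 1 + Real.exp (-z)) (by positivity)
  have e : 1 - (1 + Real.exp (-z))⁻¹ = (1 + Real.exp z)⁻¹ := by
    rw [Real.exp_neg]
    have h1 : (Real.exp z) ≠ 0 := (Real.exp_pos z).ne'
    have h2 : 1 + (Real.exp z)⁻¹ ≠ 0 := by positivity
    have h3 : 1 + Real.exp z ≠ 0 := by positivity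
    field_simp
    ring
  linarith [e ▸ h]

lemma pade_log {t : ℝ} (ht : 1 ≤ t) : 2*(t-1)/(t+1) ≤ Real.log t := by
  have ht0 : (0:ℝ) < t := by linarith
  have key : 0 ≤ (t+1) * Real.log t - 2*(t-1) := by
    set f : ℝ → ℝ := fun s => (s+1) * Real.log s - 2*(s-1) with hfdef
    have hder : ∀ s : ℝ, 0 < s → HasDerivAt f (Real.log s + (s+1) * s⁻¹ - 2) s := by
      intro s hs
      have h1 : HasDerivAt (fun s : ℝ => (s+1) * Real.log s)
          (1 * Real.log s + (s+1) * s⁻¹) s :=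
        (((hasDerivAt_id s).add_const 1)).mul (Real.hasDerivAt_log hs.ne')
      have h2 : HasDerivAt (fun s : ℝ => 2*(s-1)) 2 s := by
        simpa using ((hasDerivAt_id s).sub_const 1).const_mul 2
      have h3 := h1.sub h2
      rw [one_mul] at h3
      exact h3
    have hmono : MonotoneOn f (Set.Ici (1:ℝ)) := by
      have hint : interior (Set.Ici (1:ℝ)) = Set.Ioi 1 := interior_Ici
      apply monotoneOn_of_deriv_nonneg (convex_Ici 1)
      · intro s hs
        exact ((hder s (by simp at hs; linarith)).continuousAt).continuousWithinAt
      · rw [hint]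
        intro s hs
        exact ((hder s (by simp at hs ⊢; linarith)).differentiableAt).differentiableWithinAt
      · rw [hint]
        intro s hs
        have hs1 : (1:ℝ) < s := hs
        have hs0 : (0:ℝ) < s := by linarith
        rw [(hder s hs0).deriv]
        have hlog : 1 - s⁻¹ ≤ Real.log s := Real.one_sub_inv_le_log_of_pos hs0
        have : (s+1) * s⁻¹ = 1 + s⁻¹ := by field_simp
        rw [this]
        linarith
    have h1 : f 1 ≤ f t := hmono (by simp) (by simpa using ht) ht
    simpa [hfdef] using h1
  rw [div_le_iff₀ (by linarith)]
  linarith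

lemma llog_sq (z : ℝ) : ((1 + Real.exp z)⁻¹)^2 ≤ Real.log (1 + Real.exp (-z)) / 2 := by
  set a := Real.exp (-z) with ha
  have ha0 : 0 < a := Real.exp_pos _
  have hpade : 2*((1+a)-1)/((1+a)+1) ≤ Real.log (1+a) := pade_log (by linarith)
  have e1 : (1+a)-1 = a := by ring
  have e2 : (1+a)+1 = a+2 := by ring
  rw [e1, e2] at hpade
  have hinv : (1 + Real.exp z)⁻¹ = a / (1+a) := by
    rw [ha, Real.exp_neg]
    have h1 : Real.exp z ≠ 0 := (Real.exp_pos z).ne'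
    have h3 : 1 + Real.exp z ≠ 0 := by positivity
    field_simp
    ring
  rw [hinv]
  have key : (a/(1+a))^2 ≤ (2*a/(a+2))/2 := by
    rw [div_pow, div_div, div_le_div_iff₀ (by positivity) (by positivity)]
    nlinarith [sq_nonneg a, sq_nonneg (1+a)]
  calc (a/(1+a))^2 ≤ (2*a/(a+2))/2 := key
    _ ≤ Real.log (1+a) / 2 := by linarith

lemma grad_ineq {f f' : ℝ → ℝ} (hd : ∀ z, HasDerivAt f (f' z) z) (hmono : Monotone f')
    (a b : ℝ) : f' a * (b - a) ≤ f b - f a := by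
  rcases lt_trichotomy a b with h | h | h
  · obtain ⟨c, hc, hceq⟩ := exists_hasDerivAt_eq_slope f f' h
      (fun z _ => (hd z).continuousAt.continuousWithinAt) (fun z _ => hd z)
    have h1 : f' a ≤ f' c := hmono (le_of_lt hc.1)
    rw [eq_div_iff (sub_ne_zero.2 (ne_of_gt h))] at hceq
    have h2 : f b - f a = f' c * (b - a) := hceq.symm
    nlinarith
  · simp [h]
  · obtain ⟨c, hc, hceq⟩ := exists_hasDerivAt_eq_slope f f' h
      (fun z _ => (hd z).continuousAt.continuousWithinAt) (fun z _ => hd z)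
    have h1 : f' c ≤ f' a := hmono (le_of_lt hc.2)
    rw [eq_div_iff (sub_ne_zero.2 (ne_of_gt h))] at hceq
    have h2 : f a - f b = f' c * (a - b) := hceq.symm
    nlinarith

lemma exchange_sum {I X : Type*} [Fintype I] [DecidableEq I] [Fintype X] [DecidableEq X]
    (H : X → (I → X) → ℝ) (s : I)
    (hinv : ∀ (ι : I → X) (j : X), H j (Function.update ι s j) = H j ι) :
    ∑ ι : I → X, ∑ j : X, H j ι = (Fintype.card X : ℝ) * ∑ ι : I → X, H (ι s) ι := by
  have hinvol : Function.Involutive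
      (fun p : (I → X) × X => (Function.update p.1 s p.2, p.1 s)) := by
    intro p
    simp [Function.update_idem, Function.update_self, Function.update_eq_self]
  have h1 : ∑ ι : I → X, ∑ j : X, H j ι = ∑ p : (I → X) × X, H p.2 p.1 := by
    rw [Fintype.sum_prod_type]
  have h2 : ∑ p : (I → X) × X, H p.2 p.1 = ∑ p : (I → X) × X, H (p.1 s) p.1 := by
    refine Fintype.sum_equiv (hinvol.toPerm _) (fun p => H p.2 p.1) (fun p => H (p.1 s) p.1) ?_
    intro p
    show H p.2 p.1 = H ((Function.update p.1 s p.2) s) (Function.update p.1 s p.2)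
    rw [Function.update_self, hinv]
  have h3 : ∑ p : (I → X) × X, H (p.1 s) p.1
      = (Fintype.card X : ℝ) * ∑ ι : I → X, H (ι s) ι := by
    rw [Fintype.sum_prod_type]
    simp [Finset.sum_const, mul_comm, Finset.mul_sum]
  rw [h1, h2, h3]

lemma sqrt_add_le' {a b : ℝ} (ha : 0 ≤ a) (hb : 0 ≤ b) :
    Real.sqrt (a + b) ≤ Real.sqrt a + Real.sqrt b := by
  have h1 : a + b ≤ (Real.sqrt a + Real.sqrt b)^2 := by
    have := Real.sq_sqrt ha
    have := Real.sq_sqrt hb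
    nlinarith [Real.sqrt_nonneg a, Real.sqrt_nonneg b]
  calc Real.sqrt (a+b) ≤ Real.sqrt ((Real.sqrt a + Real.sqrt b)^2) := Real.sqrt_le_sqrt h1
    _ = Real.sqrt a + Real.sqrt b := Real.sqrt_sq (by positivity)

open scoped RealInnerProductSpace in
lemma step_ineq {E : Type*} [NormedAddCommGroup E] [InnerProductSpace ℝ E]
    {ℓ ℓ' : ℝ → ℝ} (hgrad : ∀ a b : ℝ, ℓ' a * (b - a) ≤ ℓ b - ℓ a)
    (hsq : ∀ z : ℝ, (ℓ' z)^2 ≤ ℓ z / 2)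
    (xi u w : E) (hxi : ‖xi‖ ≤ 1) :
    3/2 * ℓ ⟪xi, w⟫ + ‖w - ℓ' ⟪xi, w⟫ • xi - u‖^2 ≤ ‖w - u‖^2 + 2 * ℓ ⟪xi, u⟫ := by
  have hrw : w - ℓ' ⟪xi, w⟫ • xi - u = (w - u) - ℓ' ⟪xi, w⟫ • xi := by abel
  have hexp : ‖w - ℓ' ⟪xi, w⟫ • xi - u‖^2
      = ‖w - u‖^2 - 2*(ℓ' ⟪xi, w⟫ * (⟪xi, w⟫ - ⟪xi, u⟫)) + (ℓ' ⟪xi, w⟫)^2 * ‖xi‖^2 := by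
    rw [hrw, norm_sub_sq_real, real_inner_smul_right, real_inner_comm xi (w - u),
      inner_sub_right, norm_smul, mul_pow, Real.norm_eq_abs, sq_abs]
  have hxi2 : ‖xi‖^2 ≤ 1 := by nlinarith [norm_nonneg xi]
  have h1 : (ℓ' ⟪xi, w⟫)^2 * ‖xi‖^2 ≤ (ℓ' ⟪xi, w⟫)^2 :=
    (mul_le_mul_of_nonneg_left hxi2 (sq_nonneg _)).trans_eq (mul_one _)
  have h2 : ℓ' ⟪xi, w⟫ * (⟪xi, u⟫ - ⟪xi, w⟫) ≤ ℓ ⟪xi, u⟫ - ℓ ⟪xi, w⟫ := hgrad _ _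
  have h3 : ℓ' ⟪xi, w⟫ * (⟪xi, w⟫ - ⟪xi, u⟫) = -(ℓ' ⟪xi, w⟫ * (⟪xi, u⟫ - ⟪xi, w⟫)) := by
    ring
  have h4 := hsq ⟪xi, w⟫
  rw [hexp, h3]
  linarith

end Aux

set_option maxHeartbeats 1000000

/-- Theorem 7 of the paper: margin quantiles for averaged
SGD with the logistic loss. Randomness is modelled by a uniformly random
sequence of indices `ι : Fin T → Fin m` (the index `ι t` is the one used in the
update producing `w_{t+1}`, for `1 ≤ t < T`). For any `T > 1/γ²` and
`α ∈ [0,1]`, letting `δ(ι)` be the fraction of indices `i` with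
`xᵢᵀ(v_T/‖v_T‖) ≤ (1−α)γ/5` (when `v_T = 0` all indices count as violations,
as `v_T/‖v_T‖ = 0` then), the expectation of `δ` is at most
`(8 + 4log²(γ²T))/(3γ²T^α)`. -/
theorem stmt_13 {d m : ℕ} (hm : 0 < m)
    (x : Fin m → EuclideanSpace ℝ (Fin d)) (hx : ∀ i, ‖x i‖ ≤ 1)
    (γ : ℝ) (hγ : γ ∈ Set.Ioc (0 : ℝ) 1)
    (w₀ : EuclideanSpace ℝ (Fin d)) (hw₀ : ‖w₀‖ = 1)
    (hsep : ∀ i, γ ≤ ⟪x i, w₀⟫)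
    (ℓ ℓ' : ℝ → ℝ)
    (hℓ : ∀ z, ℓ z = Real.log (1 + Real.exp (-z)))
    (hderiv : ∀ z, HasDerivAt ℓ (ℓ' z) z)
    (T : ℕ) (hT : 1 / γ ^ 2 < (T : ℝ))
    (α : ℝ) (hα : α ∈ Set.Icc (0 : ℝ) 1)
    (W : (Fin T → Fin m) → ℕ → EuclideanSpace ℝ (Fin d))
    (hW1 : ∀ ι, W ι 1 = 0)
    (hWrec : ∀ ι (t : Fin T), 1 ≤ (t : ℕ) →
      W ι ((t : ℕ) + 1) = W ι (t : ℕ) - ℓ' ⟪x (ι t), W ι (t : ℕ)⟫ • x (ι t))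
    (v : (Fin T → Fin m) → EuclideanSpace ℝ (Fin d))
    (hv : ∀ ι, v ι = (T : ℝ)⁻¹ • ∑ t ∈ Finset.Icc 1 T, W ι t)
    (δ : (Fin T → Fin m) → ℝ)
    (hδ : ∀ ι, δ ι = ((Finset.univ.filter (fun i : Fin m =>
      ⟪x i, ‖v ι‖⁻¹ • v ι⟫ ≤ (1 - α) * γ / 5)).card : ℝ) / m) :
    ((m : ℝ) ^ T)⁻¹ * ∑ ι : Fin T → Fin m, δ ι ≤
      (8 + 4 * (Real.log (γ ^ 2 * T)) ^ 2) / (3 * γ ^ 2 * (T : ℝ) ^ α) := by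
  classical
  obtain ⟨hγ0, hγ1⟩ := hγ
  obtain ⟨hα0, hα1⟩ := hα
  have hγ2 : (0:ℝ) < γ^2 := by positivity
  have hTR1 : (1:ℝ) < T := by
    have h1 : (1:ℝ) ≤ 1/γ^2 := by
      rw [le_div_iff₀ hγ2]; nlinarith
    linarith
  have hT1 : 1 < T := by exact_mod_cast hTR1
  have hTpos : 0 < T := by omega
  have hT2 : 2 ≤ T := by omega
  have hT0R : (0:ℝ) < T := by positivity
  have hγT : 1 < γ^2 * T := by
    have := (div_lt_iff₀ hγ2).mp hT
    nlinarith
  set L := Real.log (γ^2 * T) with hLdef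
  have hL0 : 0 < L := Real.log_pos hγT
  set e₀ : ℝ := (γ^2 * (T:ℝ))⁻¹ with he₀def
  have he₀pos : 0 < e₀ := by rw [he₀def]; positivity
  have he₀ : Real.exp (-L) = e₀ := by
    rw [hLdef, he₀def, Real.exp_neg, Real.exp_log (by positivity)]
  set r := L/γ with hrdef
  have hr0 : 0 ≤ r := by rw [hrdef]; positivity
  set u : EuclideanSpace ℝ (Fin d) := r • w₀ with hudef
  have hu : ‖u‖ = r := by
    rw [hudef, norm_smul, hw₀, mul_one, Real.norm_eq_abs, abs_of_nonneg hr0]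
  have hβ0 : (0:ℝ) ≤ 1 - α := by linarith
  set R := 2*r + Real.sqrt 2 / γ with hRdef
  have hR0 : 0 ≤ R := by rw [hRdef]; positivity
  -- facts about the loss
  have hℓ'eq : ∀ z, ℓ' z = -(1 + Real.exp z)⁻¹ := by
    intro z
    have hfun : ℓ = fun z => Real.log (1 + Real.exp (-z)) := funext hℓ
    have h1 : HasDerivAt (fun y : ℝ => Real.exp (-y)) (Real.exp (-z) * (-1)) z :=
      (hasDerivAt_neg z).exp
    have h2 : HasDerivAt (fun y : ℝ => 1 + Real.exp (-y)) (Real.exp (-z) * (-1)) z :=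
      h1.const_add 1
    have h3 : HasDerivAt ℓ ((Real.exp (-z) * (-1)) / (1 + Real.exp (-z))) z := by
      rw [hfun]
      exact h2.log (by positivity)
    rw [(hderiv z).unique h3, Real.exp_neg]
    have h4 : Real.exp z ≠ 0 := (Real.exp_pos z).ne'
    have h5 : 1 + (Real.exp z)⁻¹ ≠ 0 := by positivity
    have h6 : 1 + Real.exp z ≠ 0 := by positivity
    field_simp
    ring
  have hℓ'mono : Monotone ℓ' := by
    intro a b hab
    rw [hℓ'eq a, hℓ'eq b, neg_le_neg_iff]
    have h1 : (0:ℝ) < 1 + Real.exp a := by positivity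
    have h2 : Real.exp a ≤ Real.exp b := Real.exp_le_exp.2 hab
    apply inv_anti₀ h1
    linarith
  have hgrad : ∀ a b : ℝ, ℓ' a * (b - a) ≤ ℓ b - ℓ a := grad_ineq hderiv hℓ'mono
  have hℓconv : ConvexOn ℝ Set.univ ℓ := by
    apply Monotone.convexOn_univ_of_deriv (fun z => (hderiv z).differentiableAt)
    have hd : deriv ℓ = ℓ' := funext fun z => (hderiv z).deriv
    rw [hd]; exact hℓ'mono
  have hℓ0 : ∀ z, 0 ≤ ℓ z := fun z => (hℓ z) ▸ llog_nonneg z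
  have hℓub : ∀ z, ℓ z ≤ Real.exp (-z) := fun z => (hℓ z) ▸ llog_le_exp z
  have hℓanti : ∀ {a b : ℝ}, a ≤ b → ℓ b ≤ ℓ a := by
    intro a b h
    rw [hℓ a, hℓ b]; exact llog_anti h
  have hℓlb : ∀ z, (1 + Real.exp z)⁻¹ ≤ ℓ z := fun z => (hℓ z) ▸ llog_lb z
  have hℓsq : ∀ z, (ℓ' z)^2 ≤ ℓ z / 2 := by
    intro z
    rw [hℓ'eq z, hℓ z, neg_pow]
    simpa using llog_sq z
  -- margin of the comparator
  have humargin : ∀ i, ℓ ⟪x i, u⟫ ≤ e₀ := by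
    intro i
    have h1 : L ≤ ⟪x i, u⟫ := by
      rw [hudef, real_inner_smul_right]
      have h2 : r * γ ≤ r * ⟪x i, w₀⟫ := mul_le_mul_of_nonneg_left (hsep i) hr0
      have h3 : r * γ = L := by
        rw [hrdef]; field_simp
      linarith
    calc ℓ ⟪x i, u⟫ ≤ ℓ L := hℓanti h1
      _ ≤ Real.exp (-L) := hℓub L
      _ = e₀ := he₀
  -- one-step inequality
  have hstep : ∀ (w : EuclideanSpace ℝ (Fin d)) (i : Fin m),
      3/2 * ℓ ⟪x i, w⟫ + ‖w - ℓ' ⟪x i, w⟫ • x i - u‖^2 ≤ ‖w - u‖^2 + 2 * ℓ ⟪x i, u⟫ :=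
    fun w i => step_ineq hgrad hℓsq (x i) u w (hx i)
  -- index bookkeeping
  set F : ℕ → Fin T := fun t => ⟨t % T, Nat.mod_lt t hTpos⟩ with hFdef
  have hF : ∀ t : ℕ, t < T → ((F t : Fin T) : ℕ) = t := by
    intro t ht
    simp only [hFdef]
    exact Nat.mod_eq_of_lt ht
  have hWrec' : ∀ ι (t : ℕ), 1 ≤ t → t < T →
      W ι (t + 1) = W ι t - ℓ' ⟪x (ι (F t)), W ι t⟫ • x (ι (F t)) := by
    intro ι t h1 h2
    have h3 : ((F t : Fin T) : ℕ) = t := hF t h2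
    have h4 := hWrec ι (F t) (by rw [h3]; exact h1)
    rwa [h3] at h4
  -- main induction
  have hB : ∀ ι (n : ℕ), n + 1 ≤ T →
      3/2 * (∑ t ∈ Finset.Icc 1 n, ℓ ⟪x (ι (F t)), W ι t⟫) + ‖W ι (n+1) - u‖^2
        ≤ r^2 + 2*n*e₀ := by
    intro ι n
    induction n with
    | zero =>
      intro _
      rw [Finset.Icc_eq_empty (by omega), Finset.sum_empty]
      have h1 : W ι (0+1) = 0 := hW1 ι
      rw [h1, zero_sub, norm_neg, hu]
      norm_num
    | succ n ih =>
      intro h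
      have hn1T : n + 1 < T := by omega
      have hrec := hWrec' ι (n+1) (by omega) hn1T
      have hs := hstep (W ι (n+1)) (ι (F (n+1)))
      rw [← hrec] at hs
      have hsum : ∑ t ∈ Finset.Icc 1 (n+1), ℓ ⟪x (ι (F t)), W ι t⟫
          = (∑ t ∈ Finset.Icc 1 n, ℓ ⟪x (ι (F t)), W ι t⟫)
            + ℓ ⟪x (ι (F (n+1))), W ι (n+1)⟫ :=
        Finset.sum_Icc_succ_top (by omega) _
      have ihh := ih (by omega)
      have hmar := humargin (ι (F (n+1)))
      rw [hsum]
      push_cast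
      linarith
  have hTe : 2*(T:ℝ)*e₀ = 2/γ^2 := by
    rw [he₀def]; field_simp
  -- norm bounds
  have hWnorm : ∀ ι (t : ℕ), 1 ≤ t → t ≤ T → ‖W ι t‖ ≤ R := by
    intro ι t h1 h2
    have hb := hB ι (t-1) (by omega)
    rw [show t-1+1 = t by omega] at hb
    have hsumnn : 0 ≤ ∑ s ∈ Finset.Icc 1 (t-1), ℓ ⟪x (ι (F s)), W ι s⟫ :=
      Finset.sum_nonneg fun _ _ => hℓ0 _
    have hcast : ((t-1 : ℕ) : ℝ) ≤ (T:ℝ) := by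
      have h5 : (t-1 : ℕ) ≤ T := by omega
      exact_mod_cast h5
    have hsq : ‖W ι t - u‖^2 ≤ r^2 + 2/γ^2 := by
      have h3 : 2*((t-1:ℕ):ℝ)*e₀ ≤ 2*(T:ℝ)*e₀ := by nlinarith
      linarith
    have h4 : ‖W ι t - u‖ ≤ r + Real.sqrt 2 / γ := by
      have h5 : ‖W ι t - u‖ = Real.sqrt (‖W ι t - u‖^2) :=
        (Real.sqrt_sq (norm_nonneg _)).symm
      have h6 : Real.sqrt (2/γ^2) = Real.sqrt 2 / γ := by
        rw [show (2:ℝ)/γ^2 = (Real.sqrt 2/γ)^2 by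
          rw [div_pow, Real.sq_sqrt (by norm_num : (0:ℝ) ≤ 2)], Real.sqrt_sq (by positivity)]
      rw [h5]
      calc Real.sqrt (‖W ι t - u‖^2) ≤ Real.sqrt (r^2 + 2/γ^2) := Real.sqrt_le_sqrt hsq
        _ ≤ Real.sqrt (r^2) + Real.sqrt (2/γ^2) := sqrt_add_le' (by positivity) (by positivity)
        _ = r + Real.sqrt 2 / γ := by rw [Real.sqrt_sq hr0, h6]
    have h7 := norm_add_le u (W ι t - u)
    rw [show u + (W ι t - u) = W ι t by abel] at h7
    rw [hRdef]
    rw [hu] at h7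
    linarith
  have hvnorm : ∀ ι, ‖v ι‖ ≤ R := by
    intro ι
    rw [hv ι, norm_smul, Real.norm_eq_abs, abs_of_pos (by positivity : (0:ℝ) < (T:ℝ)⁻¹)]
    have h1 : ‖∑ t ∈ Finset.Icc 1 T, W ι t‖ ≤ ∑ t ∈ Finset.Icc 1 T, ‖W ι t‖ :=
      norm_sum_le _ _
    have h2 : ∑ t ∈ Finset.Icc 1 T, ‖W ι t‖ ≤ ∑ t ∈ Finset.Icc 1 T, R := by
      apply Finset.sum_le_sum
      intro t ht
      rw [Finset.mem_Icc] at ht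
      exact hWnorm ι t ht.1 ht.2
    have h3 : ∑ _t ∈ Finset.Icc 1 T, R = (T:ℝ) * R := by
      rw [Finset.sum_const, Nat.card_Icc, show T+1-1 = T by omega, nsmul_eq_mul]
    have h4 : ‖∑ t ∈ Finset.Icc 1 T, W ι t‖ ≤ (T:ℝ) * R := by
      rw [← h3]; linarith
    calc (T:ℝ)⁻¹ * ‖∑ t ∈ Finset.Icc 1 T, W ι t‖ ≤ (T:ℝ)⁻¹ * ((T:ℝ) * R) :=
          mul_le_mul_of_nonneg_left h4 (by positivity)
      _ = R := by field_simp
  -- total loss bound along the trajectory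
  have hloss : ∀ ι, (∑ t ∈ Finset.Icc 1 (T-1), ℓ ⟪x (ι (F t)), W ι t⟫)
      + ℓ ⟪x (ι (F 0)), W ι T⟫ ≤ (2*L^2+4)/(3*γ^2) := by
    intro ι
    have hb := hB ι (T-1) (by omega)
    rw [show T-1+1 = T by omega] at hb
    have hs := hstep (W ι T) (ι (F 0))
    have hmar := humargin (ι (F 0))
    have hnn : 0 ≤ ‖W ι T - ℓ' ⟪x (ι (F 0)), W ι T⟫ • x (ι (F 0)) - u‖^2 := sq_nonneg _
    have hcast : ((T-1 : ℕ) : ℝ) = (T:ℝ) - 1 := by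
      have h5 : (1:ℕ) ≤ T := by omega
      push_cast [Nat.cast_sub h5]
      ring
    have hr2 : r^2 = L^2/γ^2 := by rw [hrdef]; field_simp
    have hgoal : (2*L^2+4)/(3*γ^2) = 2/3 * (L^2/γ^2 + 2/γ^2) := by
      field_simp; ring
    rw [hgoal]
    rw [hcast] at hb
    have hTe' : 2*((T:ℝ)-1)*e₀ + 2*e₀ = 2/γ^2 := by
      rw [← hTe]; ring
    linarith
  -- locality of W
  have hWloc : ∀ (n : ℕ), 1 ≤ n → n ≤ T → ∀ ι ι' : Fin T → Fin m,
      (∀ c : Fin T, 1 ≤ (c:ℕ) → (c:ℕ) < n → ι c = ι' c) → W ι n = W ι' n := by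
    intro n h1
    induction n, h1 using Nat.le_induction with
    | base => intro _ ι ι' _; rw [hW1, hW1]
    | succ n hn ih =>
      intro hle ι ι' hagree
      have hnT : n < T := by omega
      have hrec1 := hWrec' ι n hn hnT
      have hrec2 := hWrec' ι' n hn hnT
      have heq1 : ι (F n) = ι' (F n) := by
        apply hagree
        · rw [hF n hnT]; exact hn
        · rw [hF n hnT]; omega
      have heq2 : W ι n = W ι' n := by
        apply ih (by omega) ι ι'
        intro c hc1 hc2
        exact hagree c hc1 (by omega)
      rw [hrec1, hrec2, heq1, heq2]
  -- expectation exchange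
  have hEx : ∀ (t : ℕ) (s : Fin T), 1 ≤ t → t ≤ T → (∀ c : ℕ, 1 ≤ c → c < t → c ≠ (s:ℕ)) →
      ∑ ι : Fin T → Fin m, ∑ j : Fin m, ℓ ⟪x j, W ι t⟫
        = (m:ℝ) * ∑ ι : Fin T → Fin m, ℓ ⟪x (ι s), W ι t⟫ := by
    intro t s h1 h2 h3
    have h5 := exchange_sum (fun j ι => ℓ ⟪x j, W ι t⟫) s ?_
    · simpa using h5
    · intro ι j
      show ℓ ⟪x j, W (Function.update ι s j) t⟫ = ℓ ⟪x j, W ι t⟫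
      have h6 : W (Function.update ι s j) t = W ι t := by
        apply hWloc t h1 h2
        intro c hc1 hc2
        apply Function.update_of_ne
        intro hcs
        exact h3 (c:ℕ) hc1 hc2 (by rw [hcs])
      rw [h6]
  -- Jensen
  have hJen : ∀ ι (j : Fin m), ℓ ⟪x j, v ι⟫
      ≤ (T:ℝ)⁻¹ * ∑ t ∈ Finset.Icc 1 T, ℓ ⟪x j, W ι t⟫ := by
    intro ι j
    have hinner : ⟪x j, v ι⟫ = ∑ t ∈ Finset.Icc 1 T, (T:ℝ)⁻¹ • ⟪x j, W ι t⟫ := by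
      rw [hv ι, real_inner_smul_right, inner_sum, Finset.mul_sum]
      simp only [smul_eq_mul]
    have hcard : ∑ _t ∈ Finset.Icc 1 T, (T:ℝ)⁻¹ = 1 := by
      rw [Finset.sum_const, Nat.card_Icc, show T+1-1 = T by omega, nsmul_eq_mul]
      field_simp
    have hjen := hℓconv.map_sum_le (t := Finset.Icc 1 T) (w := fun _ => (T:ℝ)⁻¹)
      (p := fun t => ⟪x j, W ι t⟫) (fun _ _ => by positivity) hcard
      (fun _ _ => Set.mem_univ _)
    rw [hinner]
    calc ℓ (∑ t ∈ Finset.Icc 1 T, (T:ℝ)⁻¹ • ⟪x j, W ι t⟫)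
        ≤ ∑ t ∈ Finset.Icc 1 T, (T:ℝ)⁻¹ • ℓ ⟪x j, W ι t⟫ := hjen
      _ = (T:ℝ)⁻¹ * ∑ t ∈ Finset.Icc 1 T, ℓ ⟪x j, W ι t⟫ := by
          rw [Finset.mul_sum]
          simp only [smul_eq_mul]
  -- bound δ by the averaged loss
  set q := (1-α)*(2*L+Real.sqrt 2)/5 with hqdef
  set C := 1 + Real.exp q with hCdef
  have hC0 : (0:ℝ) < C := by rw [hCdef]; positivity
  have hδb : ∀ ι, δ ι ≤ C * ((m:ℝ)⁻¹ * ∑ j : Fin m, ℓ ⟪x j, v ι⟫) := by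
    intro ι
    rw [hδ ι]
    set K := (Finset.univ.filter (fun i : Fin m =>
      ⟪x i, ‖v ι‖⁻¹ • v ι⟫ ≤ (1 - α) * γ / 5)) with hKdef
    have hθ0 : 0 ≤ (1-α)*γ/5 := by positivity
    have hKmem : ∀ i ∈ K, (1 + Real.exp q)⁻¹ ≤ ℓ ⟪x i, v ι⟫ := by
      intro i hi
      rw [hKdef, Finset.mem_filter] at hi
      have hfilt := hi.2
      have hiv : ⟪x i, v ι⟫ ≤ ((1-α)*γ/5) * R := by
        rcases eq_or_ne (v ι) 0 with h0 | h0
        · rw [h0, inner_zero_right]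
          positivity
        · have hnv : 0 < ‖v ι‖ := norm_pos_iff.2 h0
          rw [real_inner_smul_right] at hfilt
          have h1 : ⟪x i, v ι⟫ ≤ ‖v ι‖ * ((1-α)*γ/5) := by
            have h8 := mul_le_mul_of_nonneg_left hfilt (le_of_lt hnv)
            rw [← mul_assoc, mul_inv_cancel₀ hnv.ne', one_mul] at h8
            linarith
          calc ⟪x i, v ι⟫ ≤ ‖v ι‖ * ((1-α)*γ/5) := h1
            _ ≤ R * ((1-α)*γ/5) := mul_le_mul_of_nonneg_right (hvnorm ι) hθ0
            _ = ((1-α)*γ/5) * R := by ring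
      have hqeq : ((1-α)*γ/5) * R = q := by
        rw [hqdef, hRdef, hrdef]
        field_simp
      rw [hqeq] at hiv
      calc (1 + Real.exp q)⁻¹ ≤ ℓ q := hℓlb q
        _ ≤ ℓ ⟪x i, v ι⟫ := hℓanti hiv
    have hsum1 : (K.card : ℝ) * (1 + Real.exp q)⁻¹ ≤ ∑ i ∈ K, ℓ ⟪x i, v ι⟫ := by
      have h9 := Finset.sum_le_sum hKmem
      rw [Finset.sum_const, nsmul_eq_mul] at h9
      exact h9
    have hsum2 : ∑ i ∈ K, ℓ ⟪x i, v ι⟫ ≤ ∑ j : Fin m, ℓ ⟪x j, v ι⟫ :=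
      Finset.sum_le_sum_of_subset_of_nonneg (Finset.filter_subset _ _)
        (fun j _ _ => hℓ0 _)
    have hKle : (K.card : ℝ) ≤ C * ∑ j : Fin m, ℓ ⟪x j, v ι⟫ := by
      have h1 : (K.card : ℝ) * (1 + Real.exp q)⁻¹ ≤ ∑ j : Fin m, ℓ ⟪x j, v ι⟫ :=
        le_trans hsum1 hsum2
      have h2 := mul_le_mul_of_nonneg_right h1 (le_of_lt hC0)
      rw [mul_assoc] at h2
      rw [show (1 + Real.exp q)⁻¹ * C = 1 by rw [hCdef]; field_simp] at h2
      rw [mul_one] at h2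
      calc (K.card : ℝ) ≤ (∑ j : Fin m, ℓ ⟪x j, v ι⟫) * C := h2
        _ = C * ∑ j : Fin m, ℓ ⟪x j, v ι⟫ := by ring
    have hm0 : (0:ℝ) < m := by exact_mod_cast hm
    rw [div_le_iff₀ hm0]
    calc (K.card : ℝ) ≤ C * ∑ j : Fin m, ℓ ⟪x j, v ι⟫ := hKle
      _ = C * ((m:ℝ)⁻¹ * ∑ j : Fin m, ℓ ⟪x j, v ι⟫) * m := by field_simp
  -- summing over all sequences
  set D := (2*L^2+4)/(3*γ^2) with hDdef
  have hD0 : 0 ≤ D := by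
    rw [hDdef]; positivity
  have hIccT : Finset.Icc 1 T = insert T (Finset.Icc 1 (T-1)) := by
    ext a
    simp only [Finset.mem_Icc, Finset.mem_insert]
    omega
  have hTnotmem : T ∉ Finset.Icc 1 (T-1) := by
    simp only [Finset.mem_Icc]
    omega
  have hA : ∑ ι : Fin T → Fin m, ∑ t ∈ Finset.Icc 1 T, ∑ j : Fin m, ℓ ⟪x j, W ι t⟫
      ≤ (m:ℝ) * ((m:ℝ)^T * D) := by
    have hswap : ∑ ι : Fin T → Fin m, ∑ t ∈ Finset.Icc 1 T, ∑ j : Fin m, ℓ ⟪x j, W ι t⟫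
        = (∑ ι : Fin T → Fin m, ∑ j : Fin m, ℓ ⟪x j, W ι T⟫)
          + ∑ t ∈ Finset.Icc 1 (T-1), ∑ ι : Fin T → Fin m, ∑ j : Fin m, ℓ ⟪x j, W ι t⟫ := by
      have h1 : ∀ ι : Fin T → Fin m, ∑ t ∈ Finset.Icc 1 T, ∑ j : Fin m, ℓ ⟪x j, W ι t⟫
          = (∑ j : Fin m, ℓ ⟪x j, W ι T⟫)
            + ∑ t ∈ Finset.Icc 1 (T-1), ∑ j : Fin m, ℓ ⟪x j, W ι t⟫ := by
        intro ι
        rw [hIccT, Finset.sum_insert hTnotmem]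
      rw [Finset.sum_congr rfl (fun ι _ => h1 ι), Finset.sum_add_distrib]
      congr 1
      exact Finset.sum_comm
    rw [hswap]
    have hExt : ∀ t ∈ Finset.Icc 1 (T-1),
        ∑ ι : Fin T → Fin m, ∑ j : Fin m, ℓ ⟪x j, W ι t⟫
          = (m:ℝ) * ∑ ι : Fin T → Fin m, ℓ ⟪x (ι (F t)), W ι t⟫ := by
      intro t ht
      rw [Finset.mem_Icc] at ht
      have htT : t < T := by omega
      apply hEx t (F t) ht.1 (by omega)
      intro c h1 h2
      rw [hF t htT]
      omega
    have hEx0 : ∑ ι : Fin T → Fin m, ∑ j : Fin m, ℓ ⟪x j, W ι T⟫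
        = (m:ℝ) * ∑ ι : Fin T → Fin m, ℓ ⟪x (ι (F 0)), W ι T⟫ := by
      apply hEx T (F 0) (by omega) (le_refl T)
      intro c h1 h2
      rw [hF 0 hTpos]
      omega
    rw [Finset.sum_congr rfl hExt, hEx0, ← Finset.mul_sum, ← mul_add, Finset.sum_comm,
      ← Finset.sum_add_distrib]
    apply mul_le_mul_of_nonneg_left _ (by positivity : (0:ℝ) ≤ (m:ℝ))
    calc ∑ ι : Fin T → Fin m,
          (ℓ ⟪x (ι (F 0)), W ι T⟫ + ∑ t ∈ Finset.Icc 1 (T-1), ℓ ⟪x (ι (F t)), W ι t⟫)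
        ≤ ∑ _ι : Fin T → Fin m, D := by
          apply Finset.sum_le_sum
          intro ι _
          have := hloss ι
          rw [hDdef]
          linarith
      _ = (m:ℝ)^T * D := by
          rw [Finset.sum_const, nsmul_eq_mul, Finset.card_univ, Fintype.card_fun,
            Fintype.card_fin, Fintype.card_fin, Nat.cast_pow]
  -- put everything together
  have hm0 : (0:ℝ) < m := by exact_mod_cast hm
  have hmain : ∑ ι : Fin T → Fin m, δ ι ≤ C * (T:ℝ)⁻¹ * ((m:ℝ)^T * D) := by
    have hterm : ∀ ι : Fin T → Fin m,
        C * ((m:ℝ)⁻¹ * ∑ j : Fin m, (T:ℝ)⁻¹ * ∑ t ∈ Finset.Icc 1 T, ℓ ⟪x j, W ι t⟫)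
          = C * (m:ℝ)⁻¹ * (T:ℝ)⁻¹ * ∑ t ∈ Finset.Icc 1 T, ∑ j : Fin m, ℓ ⟪x j, W ι t⟫ := by
      intro ι
      rw [← Finset.mul_sum, Finset.sum_comm]
      ring
    calc ∑ ι : Fin T → Fin m, δ ι
        ≤ ∑ ι : Fin T → Fin m, C * ((m:ℝ)⁻¹ * ∑ j : Fin m, ℓ ⟪x j, v ι⟫) :=
          Finset.sum_le_sum (fun ι _ => hδb ι)
      _ ≤ ∑ ι : Fin T → Fin m, C * ((m:ℝ)⁻¹ *
            ∑ j : Fin m, (T:ℝ)⁻¹ * ∑ t ∈ Finset.Icc 1 T, ℓ ⟪x j, W ι t⟫) := by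
          apply Finset.sum_le_sum
          intro ι _
          apply mul_le_mul_of_nonneg_left _ (le_of_lt hC0)
          apply mul_le_mul_of_nonneg_left _ (by positivity)
          exact Finset.sum_le_sum (fun j _ => hJen ι j)
      _ = C * (m:ℝ)⁻¹ * (T:ℝ)⁻¹ *
            ∑ ι : Fin T → Fin m, ∑ t ∈ Finset.Icc 1 T, ∑ j : Fin m, ℓ ⟪x j, W ι t⟫ := by
          rw [Finset.sum_congr rfl (fun ι _ => hterm ι), ← Finset.mul_sum]
      _ ≤ C * (m:ℝ)⁻¹ * (T:ℝ)⁻¹ * ((m:ℝ) * ((m:ℝ)^T * D)) := by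
          apply mul_le_mul_of_nonneg_left hA (by positivity)
      _ = C * (T:ℝ)⁻¹ * ((m:ℝ)^T * D) := by
          field_simp
  -- final arithmetic
  have hlogT2 : Real.log 2 ≤ Real.log T := Real.log_le_log (by norm_num) (by exact_mod_cast hT2)
  have hsqrt2 : Real.sqrt 2 ≤ 1.5 := by
    nlinarith [Real.sq_sqrt (show (0:ℝ) ≤ 2 by norm_num), Real.sqrt_nonneg 2]
  have hlog2 : (0.6931471803:ℝ) < Real.log 2 := Real.log_two_gt_d9
  have hLlogT : L ≤ Real.log T := by
    rw [hLdef]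
    apply Real.log_le_log (by positivity)
    have hγsq1 : γ^2 ≤ 1 := by nlinarith
    nlinarith [mul_le_mul_of_nonneg_right hγsq1 hT0R.le]
  have hlogT0 : 0 ≤ Real.log T := by linarith
  have hq_le : q ≤ (1-α) * Real.log T := by
    rw [hqdef]
    have h1 : (2*L + Real.sqrt 2)/5 ≤ Real.log T := by nlinarith
    calc (1-α)*(2*L+Real.sqrt 2)/5 = (1-α) * ((2*L+Real.sqrt 2)/5) := by ring
      _ ≤ (1-α) * Real.log T := mul_le_mul_of_nonneg_left h1 hβ0
  have hrpow : ∀ y : ℝ, (T:ℝ)^y = Real.exp (y * Real.log T) := by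
    intro y
    rw [Real.rpow_def_of_pos hT0R]
    ring_nf
  have hexpq : Real.exp q ≤ (T:ℝ)^(1-α) := by
    rw [hrpow]
    exact Real.exp_le_exp.2 hq_le
  have hone : 1 ≤ (T:ℝ)^(1-α) := by
    rw [hrpow]
    have h1 : (0:ℝ) ≤ (1-α) * Real.log T := mul_nonneg hβ0 hlogT0
    calc (1:ℝ) = Real.exp 0 := Real.exp_zero.symm
      _ ≤ Real.exp ((1-α) * Real.log T) := Real.exp_le_exp.2 h1
  have hCb : C ≤ 2 * (T:ℝ)^(1-α) := by
    rw [hCdef]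
    linarith
  have hTsplit : (T:ℝ)^α * (T:ℝ)^(1-α) = T := by
    rw [← Real.rpow_add hT0R, show α + (1-α) = 1 by ring, Real.rpow_one]
  have hTα0 : (0:ℝ) < (T:ℝ)^α := Real.rpow_pos_of_pos hT0R α
  have hmT0 : (0:ℝ) < (m:ℝ)^T := by positivity
  have hfin1 : ((m:ℝ)^T)⁻¹ * ∑ ι : Fin T → Fin m, δ ι ≤ C * (T:ℝ)⁻¹ * D := by
    have h1 := mul_le_mul_of_nonneg_left hmain (le_of_lt (inv_pos.2 hmT0))
    calc ((m:ℝ)^T)⁻¹ * ∑ ι : Fin T → Fin m, δ ι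
        ≤ ((m:ℝ)^T)⁻¹ * (C * (T:ℝ)⁻¹ * ((m:ℝ)^T * D)) := h1
      _ = C * (T:ℝ)⁻¹ * D := by field_simp
  have hCT : C * (T:ℝ)^α ≤ 2 * T := by
    calc C * (T:ℝ)^α ≤ 2*(T:ℝ)^(1-α) * (T:ℝ)^α :=
          mul_le_mul_of_nonneg_right hCb (le_of_lt hTα0)
      _ = 2*((T:ℝ)^α * (T:ℝ)^(1-α)) := by ring
      _ = 2*T := by rw [hTsplit]
  have hfin2 : C * (T:ℝ)⁻¹ * D ≤ (8 + 4*L^2)/(3*γ^2*(T:ℝ)^α) := by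
    rw [hDdef]
    rw [show C * (T:ℝ)⁻¹ * ((2*L^2+4)/(3*γ^2)) = (C*(2*L^2+4))/(3*γ^2*T) by
      field_simp]
    rw [div_le_div_iff₀ (by positivity) (by positivity)]
    have h1 := mul_le_mul_of_nonneg_left hCT
      (show (0:ℝ) ≤ (2*L^2+4)*(3*γ^2) by positivity)
    nlinarith [h1]
  exact le_trans hfin1 hfin2
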